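/- arXiv:1004.1083 — 3 statements merged into one kernel-verified Lean document; each statement's English description precedes it below -/
import Mathlib

section
/- Let a > 0 and let k be an even nonnegative integer. The function s ↦ ∫_{−∞}^{∞} (x² + a²)^{−s} xᵏ dx, defined for Re(s) > (k+1)/2, extends meromorphically and satisfies: minus its derivative at s = 0, after multiplying the integrand by iᵏ (i.e. replacing xᵏ by (ix)ᵏ), equals π ∫_{−a}^{a} xᵏ dx = 2π aᵏ⁺¹/(k+1) · iᵏ·(−1)^{k/2}. Equivalently, the regularized integral ∫^∧ (ix)ᵏ log(x² + a²) dx equals π ∫_{−a}^{a} xᵏ dx. -/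
open Complex MeasureTheory Set

lemma my_integral_comp_abs {f : ℝ → ℂ} :
    ∫ x, f |x| = 2 * ∫ x in Ioi (0 : ℝ), f x := by
  have eq : ∫ (x : ℝ) in Ioi 0, f |x| = ∫ (x : ℝ) in Ioi 0, f x := by
    refine setIntegral_congr_fun measurableSet_Ioi (fun _ hx => ?_)
    rw [abs_eq_self.mpr (le_of_lt (by exact hx))]
  by_cases hf : IntegrableOn (fun x => f |x|) (Ioi 0)
  · have int_Iic : IntegrableOn (fun x ↦ f |x|) (Iic 0) := by
      rw [← Measure.map_neg_eq_self (volume : Measure ℝ)]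
      let m : MeasurableEmbedding fun x : ℝ => -x := (Homeomorph.neg ℝ).measurableEmbedding
      rw [m.integrableOn_map_iff]
      simp_rw [Function.comp_def, abs_neg, neg_preimage, neg_Iic, neg_zero]
      exact Iff.mpr integrableOn_Ici_iff_integrableOn_Ioi hf
    calc
      _ = (∫ x in Iic 0, f |x|) + ∫ x in Ioi 0, f |x| := by
        rw [← setIntegral_union (Iic_disjoint_Ioi le_rfl) measurableSet_Ioi int_Iic hf,
          Iic_union_Ioi, Measure.restrict_univ]
      _ = 2 * ∫ x in Ioi 0, f x := by
        rw [two_mul, eq]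
        congr! 1
        rw [← neg_zero, ← integral_comp_neg_Iic, neg_zero]
        refine setIntegral_congr_fun measurableSet_Iic (fun _ hx => ?_)
        rw [abs_eq_neg_self.mpr (by exact hx)]
  · have : ¬ Integrable (fun x => f |x|) := by
      contrapose! hf
      exact hf.integrableOn
    rw [← eq, integral_undef hf, integral_undef this, mul_zero]

lemma my_cos_nat (n : ℕ) : Complex.cos (n * (Real.pi : ℂ)) = (-1) ^ n := by
  induction n with
  | zero => simp
  | succ p ih =>
      have h : ((p + 1 : ℕ) : ℂ) * (Real.pi : ℂ) = p * Real.pi + Real.pi := by push_cast; ring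
      rw [h, Complex.cos_add_pi, ih]; ring

lemma my_cpow_exp {t : ℝ} (ht : 0 < t) (w : ℂ) :
    (t : ℂ) ^ w = Complex.exp (w * (Real.log t : ℂ)) := by
  rw [Complex.cpow_def_of_ne_zero (by exact_mod_cast ht.ne'), Complex.ofReal_log ht.le, mul_comm]

lemma my_cast_exp {t : ℝ} (ht : 0 < t) :
    (t : ℂ) = Complex.exp ((Real.log t : ℂ)) := by
  rw [← Complex.ofReal_exp, Real.exp_log ht]


/-- Let `a > 0` and `k` an even natural number.  The function
`s ↦ ∫_{−∞}^{∞} (x² + a²)^{−s} xᵏ dx` (defined for `Re s > (k+1)/2`) agrees there with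
its meromorphic continuation `F(s) = a^{k+1−2s} Γ((k+1)/2) Γ(s − (k+1)/2) / Γ(s)`
(the Beta function identity), and the regularized integral
`∫^∧ (ix)ᵏ log(x² + a²) dx := −(d/ds)|₀ ∫ (ix)ᵏ (x²+a²)^{−s} dx = −iᵏ F'(0)`
equals `π ∫_{−a}^{a} xᵏ dx`. -/
theorem regularized_integral_log_sq_add_sq (a : ℝ) (ha : 0 < a) (k : ℕ) (hk : Even k) :
    let F : ℂ → ℂ := fun s =>
      (a : ℂ) ^ ((k : ℂ) + 1 - 2 * s) *
        (Complex.Gamma (((k : ℂ) + 1) / 2) * Complex.Gamma (s - ((k : ℂ) + 1) / 2) /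
          Complex.Gamma s)
    (∀ s : ℂ, ((k : ℝ) + 1) / 2 < s.re →
        F s = ∫ x : ℝ, ((x ^ 2 + a ^ 2 : ℝ) : ℂ) ^ (-s) * (x : ℂ) ^ k) ∧
      -(Complex.I ^ k * deriv F 0) = (Real.pi : ℂ) * ∫ x in (-a)..a, (x : ℂ) ^ k := by
  intro F
  constructor
  · intro s hs
    simp only [F]
    set u : ℂ := ((k : ℂ) + 1) / 2 with hu_def
    have hu_eq : u = ((((k : ℝ) + 1) / 2 : ℝ) : ℂ) := by rw [hu_def]; push_cast; ring
    have hu_pos : 0 < u.re := by rw [hu_eq, Complex.ofReal_re]; positivity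
    have hv_pos : 0 < (s - u).re := by
      rw [Complex.sub_re, hu_eq, Complex.ofReal_re]; linarith
    have hs_pos : 0 < s.re := by
      have : (0 : ℝ) ≤ ((k : ℝ) + 1) / 2 := by positivity
      linarith
    have hΓs : Complex.Gamma s ≠ 0 := Complex.Gamma_ne_zero_of_re_pos hs_pos
    set g : ℝ → ℂ := fun x => ((x ^ 2 + a ^ 2 : ℝ) : ℂ) ^ (-s) * (x : ℂ) ^ k with hg_def
    set f : ℝ → ℝ := fun y => a * Real.sqrt (y / (1 - y)) with hf_def
    set f' : ℝ → ℝ := fun y =>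
      a * ((1 - y) ^ 2)⁻¹ * 2⁻¹ * (Real.sqrt (y / (1 - y)))⁻¹ with hf'_def
    -- derivative
    have hderiv : ∀ y ∈ Ioo (0 : ℝ) 1, HasDerivWithinAt f (f' y) (Ioo (0 : ℝ) 1) y := by
      rintro y ⟨hy0, hy1⟩
      have h1y : (0 : ℝ) < 1 - y := by linarith
      have hr : (0 : ℝ) < y / (1 - y) := div_pos hy0 h1y
      have hd1 : HasDerivAt (fun y : ℝ => y / (1 - y)) (((1 - y) ^ 2)⁻¹) y := by
        have h := (hasDerivAt_id y).div ((hasDerivAt_id y).const_sub 1) h1y.ne'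
        refine h.congr_deriv ?_
        simp only [id]
        field_simp
        ring
      have hd2 := (Real.hasDerivAt_sqrt hr.ne').comp y hd1
      have hd3 := hd2.const_mul a
      refine HasDerivAt.hasDerivWithinAt ?_
      refine hd3.congr_deriv ?_
      rw [hf'_def]
      field_simp
    -- injectivity
    have hinj : InjOn f (Ioo (0 : ℝ) 1) := by
      rintro y1 ⟨h10, h11⟩ y2 ⟨h20, h21⟩ heq
      have h1y1 : (0 : ℝ) < 1 - y1 := by linarith
      have h1y2 : (0 : ℝ) < 1 - y2 := by linarith
      have hr1 : (0 : ℝ) ≤ y1 / (1 - y1) := (div_pos h10 h1y1).le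
      have hr2 : (0 : ℝ) ≤ y2 / (1 - y2) := (div_pos h20 h1y2).le
      have hs1 : Real.sqrt (y1 / (1 - y1)) = Real.sqrt (y2 / (1 - y2)) :=
        mul_left_cancel₀ ha.ne' heq
      have h3 : y1 / (1 - y1) = y2 / (1 - y2) := by
        rw [← Real.sq_sqrt hr1, ← Real.sq_sqrt hr2, hs1]
      rw [div_eq_div_iff h1y1.ne' h1y2.ne'] at h3
      nlinarith
    -- image
    have himg : f '' Ioo (0 : ℝ) 1 = Ioi (0 : ℝ) := by
      apply Subset.antisymm
      · rintro x ⟨y, ⟨hy0, hy1⟩, rfl⟩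
        exact mul_pos ha (Real.sqrt_pos.2 (div_pos hy0 (by linarith)))
      · intro x hx
        have hx : (0 : ℝ) < x := hx
        have hden : (0 : ℝ) < x ^ 2 + a ^ 2 := by positivity
        refine ⟨x ^ 2 / (x ^ 2 + a ^ 2), ⟨by positivity, ?_⟩, ?_⟩
        · rw [div_lt_one hden]; nlinarith
        · have h1 : 1 - x ^ 2 / (x ^ 2 + a ^ 2) = a ^ 2 / (x ^ 2 + a ^ 2) := by field_simp; ring
          rw [hf_def]
          dsimp only
          rw [h1]
          have h2 : x ^ 2 / (x ^ 2 + a ^ 2) / (a ^ 2 / (x ^ 2 + a ^ 2)) = (x / a) ^ 2 := by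
            field_simp
          rw [h2, Real.sqrt_sq (by positivity)]
          field_simp
    -- pointwise identity
    have hpt : ∀ y ∈ Ioo (0 : ℝ) 1, |f' y| • g (f y) =
        ((a : ℂ) ^ ((k : ℂ) + 1 - 2 * s) / 2) * ((y : ℂ) ^ (u - 1) * ((1 : ℂ) - (y : ℂ)) ^ (s - u - 1)) := by
      rintro y ⟨hy0, hy1⟩
      have h1y : (0 : ℝ) < 1 - y := by linarith
      have hr : (0 : ℝ) < y / (1 - y) := div_pos hy0 h1y
      have hsr : (0 : ℝ) < Real.sqrt (y / (1 - y)) := Real.sqrt_pos.2 hr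
      have hfp : (0 : ℝ) < f y := mul_pos ha hsr
      have hf'p : (0 : ℝ) < f' y := by
        rw [hf'_def]; dsimp only; positivity
      have hsq : f y ^ 2 + a ^ 2 = a ^ 2 * (1 - y)⁻¹ := by
        rw [hf_def]
        dsimp only
        rw [mul_pow, Real.sq_sqrt hr.le]
        field_simp
        ring
      -- log computations
      have L1 : Real.log (f' y) = Real.log a - 2 * Real.log (1 - y) - Real.log 2
          - (Real.log y - Real.log (1 - y)) / 2 := by
        rw [hf'_def]
        dsimp only
        rw [Real.log_mul (by positivity) (by positivity),
          Real.log_mul (by positivity) (by positivity),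
          Real.log_mul (by positivity) (by positivity),
          Real.log_inv, Real.log_inv, Real.log_inv, Real.log_pow,
          Real.log_sqrt hr.le, Real.log_div hy0.ne' h1y.ne']
        push_cast
        ring
      have L2 : Real.log (f y ^ k) = k * (Real.log a + (Real.log y - Real.log (1 - y)) / 2) := by
        rw [Real.log_pow, hf_def]
        dsimp only
        rw [Real.log_mul ha.ne' hsr.ne', Real.log_sqrt hr.le, Real.log_div hy0.ne' h1y.ne']
      have L3 : Real.log (a ^ 2 * (1 - y)⁻¹) = 2 * Real.log a - Real.log (1 - y) := by
        rw [Real.log_mul (by positivity) (by positivity), Real.log_inv, Real.log_pow]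
        push_cast
        ring
      rw [hg_def]
      dsimp only
      rw [abs_of_pos hf'p, Complex.real_smul, hsq]
      rw [show ((f y : ℝ) : ℂ) ^ k = ((f y ^ k : ℝ) : ℂ) by push_cast; ring]
      rw [show ((1 : ℂ) - (y : ℂ)) = ((1 - y : ℝ) : ℂ) by push_cast; ring]
      rw [my_cast_exp hf'p, my_cpow_exp (show (0:ℝ) < a ^ 2 * (1 - y)⁻¹ by positivity),
        my_cast_exp (pow_pos hfp k), my_cpow_exp ha, my_cpow_exp hy0, my_cpow_exp h1y]
      rw [div_eq_mul_inv]
      rw [show ((2 : ℂ))⁻¹ = Complex.exp (-((Real.log 2 : ℝ) : ℂ)) by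
        rw [Complex.exp_neg, ← my_cast_exp (by norm_num : (0:ℝ) < 2)]; norm_num]
      simp only [← Complex.exp_add]
      congr 1
      rw [L1, L2, L3]
      push_cast
      ring
    -- beta integral over Ioo
    have hbeta : Complex.betaIntegral u (s - u) =
        ∫ y in Ioo (0 : ℝ) 1, (y : ℂ) ^ (u - 1) * ((1 : ℂ) - (y : ℂ)) ^ (s - u - 1) := by
      rw [Complex.betaIntegral, intervalIntegral.integral_of_le zero_le_one,
        MeasureTheory.integral_Ioc_eq_integral_Ioo]
    have hGG : Complex.Gamma u * Complex.Gamma (s - u)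
        = Complex.Gamma s * Complex.betaIntegral u (s - u) := by
      have := Complex.Gamma_mul_Gamma_eq_betaIntegral hu_pos hv_pos
      rwa [show u + (s - u) = s by ring] at this
    have main : (∫ x : ℝ, g x) = (a : ℂ) ^ ((k : ℂ) + 1 - 2 * s) * Complex.betaIntegral u (s - u) := by
      calc (∫ x : ℝ, g x) = ∫ x : ℝ, g |x| := by
            congr 1
            funext x
            rw [hg_def]
            dsimp only
            rw [_root_.sq_abs]
            congr 1
            rw [← Complex.ofReal_pow, ← Complex.ofReal_pow, Even.pow_abs hk]
        _ = 2 * ∫ x in Ioi (0 : ℝ), g x := my_integral_comp_abs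
        _ = 2 * ∫ y in Ioo (0 : ℝ) 1, |f' y| • g (f y) := by
            rw [← himg, integral_image_eq_integral_abs_deriv_smul measurableSet_Ioo hderiv hinj]
        _ = 2 * ∫ y in Ioo (0 : ℝ) 1, ((a : ℂ) ^ ((k : ℂ) + 1 - 2 * s) / 2) *
              ((y : ℂ) ^ (u - 1) * ((1 : ℂ) - (y : ℂ)) ^ (s - u - 1)) := by
            congr 1
            exact setIntegral_congr_fun measurableSet_Ioo hpt
        _ = 2 * (((a : ℂ) ^ ((k : ℂ) + 1 - 2 * s) / 2) *
              ∫ y in Ioo (0 : ℝ) 1, (y : ℂ) ^ (u - 1) * ((1 : ℂ) - (y : ℂ)) ^ (s - u - 1)) := by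
            rw [MeasureTheory.integral_const_mul]
        _ = (a : ℂ) ^ ((k : ℂ) + 1 - 2 * s) * Complex.betaIntegral u (s - u) := by
            rw [hbeta]
            ring
    rw [main, hGG, mul_comm (Complex.Gamma s), mul_div_assoc, div_self hΓs, mul_one]
  · obtain ⟨m, hm⟩ := hk
    have hkm : k = 2 * m := by omega
    set u : ℂ := ((k : ℂ) + 1) / 2 with hu_def
    have hu_eq : u = ((((k : ℝ) + 1) / 2 : ℝ) : ℂ) := by rw [hu_def]; push_cast; ring
    have hu_re : u.re = ((k : ℝ) + 1) / 2 := by rw [hu_eq, Complex.ofReal_re]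
    have hu_pos : 0 < u.re := by rw [hu_re]; positivity
    have hu_ne : u ≠ 0 := fun h => by simp [h] at hu_pos
    have haC : (a : ℂ) ≠ 0 := by exact_mod_cast ha.ne'
    -- the entire factor
    set A : ℂ → ℂ := fun s => (a : ℂ) ^ ((k : ℂ) + 1 - 2 * s) * (Complex.Gamma u * Complex.Gamma (s - u)) with hA_def
    have hF_eq : F = fun s => A s * (Complex.Gamma s)⁻¹ := by
      funext s
      simp only [F, A, hu_def, div_eq_mul_inv]
      ring
    have hA_diff : DifferentiableAt ℂ A 0 := by
      apply DifferentiableAt.mul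
      · exact DifferentiableAt.const_cpow (by fun_prop) (Or.inl haC)
      · apply DifferentiableAt.const_mul
        have hGamma : DifferentiableAt ℂ Complex.Gamma (-u) := by
          apply Complex.differentiableAt_Gamma
          intro n hn
          have : u = (n : ℂ) := by linear_combination -hn
          rw [hu_def] at this
          have h2 : (k : ℂ) + 1 = 2 * (n : ℂ) := by linear_combination 2 * this
          have h3 : ((k + 1 : ℕ) : ℂ) = ((2 * n : ℕ) : ℂ) := by push_cast; linear_combination h2
          have h4 : k + 1 = 2 * n := Nat.cast_injective h3
          omega
        have hsub : DifferentiableAt ℂ (fun s : ℂ => s - u) 0 := differentiableAt_id.sub_const u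
        have hGamma' : DifferentiableAt ℂ Complex.Gamma ((fun s : ℂ => s - u) 0) := by
          simpa using hGamma
        have := hGamma'.comp (0 : ℂ) hsub
        simpa [Function.comp_def] using this
    have hGinv : HasDerivAt (fun s : ℂ => (Complex.Gamma s)⁻¹) 1 0 := by
      have e : (fun s : ℂ => (Complex.Gamma s)⁻¹) = fun s => s * (Complex.Gamma (s + 1))⁻¹ := by
        funext s
        have := Complex.one_div_Gamma_eq_self_mul_one_div_Gamma_add_one s
        simpa [one_div] using this
      rw [e]
      have hd : DifferentiableAt ℂ (fun s : ℂ => (Complex.Gamma (s + 1))⁻¹) 0 := by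
        have := (Complex.differentiable_one_div_Gamma.comp
          (differentiable_id.add_const 1)).differentiableAt (x := (0 : ℂ))
        simpa [Function.comp_def] using this
      have := (hasDerivAt_id (0 : ℂ)).mul hd.hasDerivAt
      refine this.congr_deriv ?_
      simp [Complex.Gamma_one]
    have hFd : HasDerivAt F (A 0) 0 := by
      rw [hF_eq]
      have := (hA_diff.hasDerivAt).mul hGinv
      refine this.congr_deriv ?_
      simp [Complex.Gamma_zero]
    have hderivF : deriv F 0 = A 0 := hFd.deriv
    -- compute A 0
    have hsin : Complex.sin ((Real.pi : ℂ) * u) = (-1) ^ m := by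
      have h1 : (Real.pi : ℂ) * u = m * Real.pi + Real.pi / 2 := by
        rw [hu_def, hkm]; push_cast; ring
      rw [h1, Complex.sin_add, Complex.sin_nat_mul_pi, Complex.sin_pi_div_two,
        Complex.cos_pi_div_two, my_cos_nat]
      ring
    have hsin_ne : Complex.sin ((Real.pi : ℂ) * u) ≠ 0 := by
      rw [hsin]; exact pow_ne_zero _ (by norm_num)
    have hrefl := Complex.Gamma_mul_Gamma_one_sub u
    have hneg : Complex.Gamma (1 - u) = -u * Complex.Gamma (-u) := by
      have := Complex.Gamma_add_one (-u) (neg_ne_zero.2 hu_ne)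
      rw [show -u + 1 = 1 - u by ring] at this
      exact this
    have hprod : Complex.Gamma u * Complex.Gamma (-u) =
        (Real.pi : ℂ) / ((-1) ^ m) * (-u)⁻¹ := by
      rw [← hsin]
      have hnu : (-u) ≠ 0 := neg_ne_zero.2 hu_ne
      field_simp
      rw [hneg] at hrefl
      field_simp at hrefl
      linear_combination -1 * hrefl - 2 * Complex.Gamma u * Complex.Gamma (-u) * hu_def
    have hA0 : A 0 = ((a ^ (k + 1) : ℝ) : ℂ) * ((Real.pi : ℂ) / ((-1) ^ m) * (-u)⁻¹) := by
      rw [hA_def]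
      simp only [zero_sub]
      rw [hprod]
      congr 1
      rw [show (k : ℂ) + 1 - 2 * 0 = ((k + 1 : ℕ) : ℂ) by push_cast; ring, Complex.cpow_natCast]
      push_cast; ring
    -- the right side integral
    have hint : (∫ x in (-a)..a, (x : ℂ) ^ k) = ((2 * a ^ (k + 1) / (k + 1) : ℝ) : ℂ) := by
      have h1 : (∫ x in (-a)..a, (x : ℂ) ^ k) = ((∫ x in (-a)..a, x ^ k : ℝ) : ℂ) := by
        rw [← intervalIntegral.integral_ofReal]
        congr 1
        funext x
        push_cast
        ring
      rw [h1, integral_pow]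
      congr 1
      rw [Odd.neg_pow (by exact Even.add_one ⟨m, hm⟩)]
      ring
    rw [hderivF, hA0, hint]
    have hIk : (Complex.I) ^ k = (-1 : ℂ) ^ m := by
      rw [hkm, pow_mul, Complex.I_sq]
    rw [hIk]
    have hm1 : ((-1 : ℂ)) ^ m ≠ 0 := pow_ne_zero _ (by norm_num)
    have hk1 : (k : ℂ) + 1 ≠ 0 := by exact_mod_cast Nat.succ_ne_zero k
    rw [hu_def]
    have h5 : (-(((k : ℂ) + 1) / 2))⁻¹ = -(2 / ((k : ℂ) + 1)) := by rw [inv_neg, inv_div]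
    rw [h5]
    push_cast
    field_simp
end

section
/- Let A ∈ GLₙ(ℤ) and suppose exactly one eigenvalue of A equals 1, with the corresponding eigenspace W = ker(1 − A) of rank 1 in ℤⁿ, and no other eigenvalue of A is a root of unity. Let A' be the endomorphism induced by A on ℤⁿ/W. Then there is a short exact sequence 0 → ℤ → coker(1 − Aᴺ) → coker(1 − A'ᴺ) → 0 for every N ≥ 1. -/
open Polynomial Matrix

lemma key_aux {n : ℕ} (A : Matrix (Fin n) (Fin n) ℤ)
    (hmult : (Matrix.charpoly (A.map ((↑) : ℤ → ℂ))).rootMultiplicity 1 = 1)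
    (hroots : ∀ z : ℂ, (Matrix.charpoly (A.map ((↑) : ℤ → ℂ))).IsRoot z → z ≠ 1 →
      ∀ m : ℕ, 0 < m → z ^ m ≠ 1)
    (N : ℕ) (hN : 1 ≤ N) (x : Fin n → ℤ)
    (hx : ((1 - A) * (1 - A ^ N)) *ᵥ x = 0) : (1 - A) *ᵥ x = 0 := by
  set φ : ℤ →+* ℂ := Int.castRingHom ℂ with hφ
  set B : Matrix (Fin n) (Fin n) ℂ := A.map ((↑) : ℤ → ℂ) with hB
  have hBφ : B = A.map ⇑φ := rfl
  set χ : ℂ[X] := Matrix.charpoly B with hχ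
  have hχ0 : χ ≠ 0 := (Matrix.charpoly_monic B).ne_zero
  have hroot1 : χ.IsRoot 1 := by
    rw [← Polynomial.rootMultiplicity_pos hχ0]; omega
  set g : ℂ[X] := χ /ₘ (X - C 1) with hgdef
  have hg : (X - C 1) * g = χ := mul_divByMonic_eq_iff_isRoot.2 hroot1
  have hg1 : ¬ g.IsRoot 1 := by
    intro h
    have h2 : (X - C (1:ℂ)) ^ 2 ∣ χ := by
      rw [← hg, pow_two]
      exact mul_dvd_mul_left _ (dvd_iff_isRoot.2 h)
    have := (le_rootMultiplicity_iff hχ0).2 h2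
    omega
  set c : ℂ[X] := ∑ i ∈ Finset.range N, X ^ i with hcdef
  have hc : c * (X - C 1) = X ^ N - 1 := by
    simpa using geom_sum_mul (X : ℂ[X]) N
  have hcop : IsCoprime ((X - C 1) * c) g := by
    rw [Polynomial.isCoprime_iff_aeval_ne_zero_of_isAlgClosed (k := ℂ) ℂ]
    intro z
    by_contra hcon
    push_neg at hcon
    obtain ⟨h1, h2⟩ := hcon
    rw [_root_.map_mul, _root_.map_sub, aeval_X, aeval_C, mul_eq_zero] at h1
    by_cases hz : z = 1
    · subst hz
      apply hg1
      rw [IsRoot, ← Polynomial.coe_aeval_eq_eval]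
      exact h2
    · have hcz : Polynomial.aeval z c = 0 := by
        rcases h1 with h | h
        · exact absurd (sub_eq_zero.1 (by simpa using h)) hz
        · exact h
      have h4 : Polynomial.aeval z c * (z - 1) = z ^ N - 1 := by
        have := congrArg (Polynomial.aeval z) hc
        simpa using this
      have hzN : z ^ N = 1 := by
        rw [hcz, zero_mul] at h4
        exact sub_eq_zero.1 h4.symm
      have hgz : g.eval z = 0 := by rw [← Polynomial.coe_aeval_eq_eval]; exact h2
      have hχz : χ.IsRoot z := by rw [← hg, IsRoot, eval_mul, hgz, mul_zero]
      exact hroots z hχz hz N hN hzN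
  obtain ⟨a, b, hbez⟩ := hcop
  have hid : (X - C (1:ℂ)) = a * ((X - C 1) * ((X:ℂ[X]) ^ N - 1)) + b * χ := by
    linear_combination (-(X - C (1:ℂ))) * hbez + a * (X - C (1:ℂ)) * hc + b * hg
  have hAev : (B - 1) = Polynomial.aeval B a * ((B - 1) * (B ^ N - 1)) := by
    have h5 := congrArg (Polynomial.aeval B) hid
    simpa [hχ, Matrix.aeval_self_charpoly] using h5
  set xc : Fin n → ℂ := fun i => ((x i : ℂ)) with hxc
  have hcast : ∀ M : Matrix (Fin n) (Fin n) ℤ, M.map ⇑φ = φ.mapMatrix M := fun _ => rfl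
  have hcompx : ⇑φ ∘ x = xc := by funext j; simp [hxc, hφ]
  have hmap : ((1 - A) * (1 - A ^ N)).map ⇑φ = (1 - B) * (1 - B ^ N) := by
    rw [hcast, _root_.map_mul, _root_.map_sub, _root_.map_sub, _root_.map_one, _root_.map_pow, ← hcast A, ← hBφ]
  have hxc0 : ((1 - B) * (1 - B ^ N)) *ᵥ xc = 0 := by
    funext i
    have h := RingHom.map_mulVec φ ((1 - A) * (1 - A ^ N)) x i
    rw [hx, hmap, hcompx] at h
    simpa using h.symm
  have hkey : (B - 1) *ᵥ xc = 0 := by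
    have h3 : (B - 1) * (B ^ N - 1) = (1 - B) * (1 - B ^ N) := by
      rw [← neg_sub B 1, ← neg_sub (B ^ N) 1, neg_mul_neg]
    rw [hAev, ← Matrix.mulVec_mulVec, h3, hxc0, Matrix.mulVec_zero]
  funext i
  have hmap1 : (1 - A).map ⇑φ = 1 - B := by
    rw [hcast, _root_.map_sub, _root_.map_one, ← hcast A, ← hBφ]
  have h1B : (1 - B) *ᵥ xc = 0 := by
    rw [← neg_sub B 1, Matrix.neg_mulVec, hkey, neg_zero]
  have h := RingHom.map_mulVec φ (1 - A) x i
  rw [hmap1, hcompx, h1B] at h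
  have h' : ((((1 - A) *ᵥ x) i : ℤ) : ℂ) = 0 := by simpa [hφ] using h
  exact_mod_cast h'

/-- Let `A ∈ GLₙ(ℤ)` with exactly one eigenvalue equal to `1` (counted with
multiplicity in the characteristic polynomial), whose fixed lattice
`W = ker(1 − A) ⊆ ℤⁿ` has rank `1`, and none of whose other eigenvalues is a root of
unity.  Let `A'` be the endomorphism induced by `A` on `ℤⁿ/W`.  Then for every `N ≥ 1`
there is a short exact sequence `0 → ℤ → coker(1 − Aᴺ) → coker(1 − A'ᴺ) → 0`. -/
theorem coker_one_sub_pow_exact_seq {n : ℕ} (A : Matrix (Fin n) (Fin n) ℤ)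
    (hA : IsUnit A.det)
    (W : Submodule ℤ (Fin n → ℤ))
    (hW : W = LinearMap.ker (Matrix.toLin' ((1 : Matrix (Fin n) (Fin n) ℤ) - A)))
    (hWrank : Nonempty (W ≃ₗ[ℤ] ℤ))
    (hmult : (Matrix.charpoly (A.map ((↑) : ℤ → ℂ))).rootMultiplicity 1 = 1)
    (hroots : ∀ z : ℂ, (Matrix.charpoly (A.map ((↑) : ℤ → ℂ))).IsRoot z → z ≠ 1 →
      ∀ m : ℕ, 0 < m → z ^ m ≠ 1)
    (hWN : ∀ N : ℕ, W ≤ W.comap (Matrix.toLin' (A ^ N))) :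
    ∀ N : ℕ, 1 ≤ N →
      ∃ (ι : ℤ →ₗ[ℤ]
            ((Fin n → ℤ) ⧸
              LinearMap.range (Matrix.toLin' ((1 : Matrix (Fin n) (Fin n) ℤ) - A ^ N))))
        (p : ((Fin n → ℤ) ⧸
              LinearMap.range (Matrix.toLin' ((1 : Matrix (Fin n) (Fin n) ℤ) - A ^ N))) →ₗ[ℤ]
            (((Fin n → ℤ) ⧸ W) ⧸
              LinearMap.range
                (LinearMap.id - Submodule.mapQ W W (Matrix.toLin' (A ^ N)) (hWN N)))),
        Function.Injective ι ∧ Function.Surjective p ∧ LinearMap.range ι = LinearMap.ker p := by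
  intro N hN
  obtain ⟨e0⟩ := hWrank
  set e : ℤ ≃ₗ[ℤ] W := e0.symm with he
  set T : (Fin n → ℤ) →ₗ[ℤ] (Fin n → ℤ) :=
    Matrix.toLin' ((1 : Matrix (Fin n) (Fin n) ℤ) - A ^ N) with hT
  set R : Submodule ℤ (Fin n → ℤ) := LinearMap.range T with hR
  have hTy : ∀ y, T y = y - (A ^ N) *ᵥ y := by
    intro y
    rw [hT, Matrix.toLin'_apply, Matrix.sub_mulVec, Matrix.one_mulVec]
  have hfix : ∀ (k : ℕ) (v : Fin n → ℤ), A *ᵥ v = v → (A ^ k) *ᵥ v = v := by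
    intro k v hv
    induction k with
    | zero => simp
    | succ m ih => rw [pow_succ, ← Matrix.mulVec_mulVec, hv, ih]
  have key2 : ∀ w, w ∈ W → w ∈ R → w = 0 := by
    intro w hwW hwR
    obtain ⟨y, hy⟩ := hwR
    have hy' : ((1 : Matrix (Fin n) (Fin n) ℤ) - A ^ N) *ᵥ y = w := by
      rw [← Matrix.toLin'_apply]; exact hy
    have hw0 : ((1 : Matrix (Fin n) (Fin n) ℤ) - A) *ᵥ w = 0 := by
      rw [hW, LinearMap.mem_ker, Matrix.toLin'_apply] at hwW
      exact hwW
    have hcomp : (((1 : Matrix (Fin n) (Fin n) ℤ) - A) * (1 - A ^ N)) *ᵥ y = 0 := by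
      rw [← Matrix.mulVec_mulVec, hy', hw0]
    have h1 := key_aux A hmult hroots N hN y hcomp
    have hAy : A *ᵥ y = y := by
      rw [Matrix.sub_mulVec, Matrix.one_mulVec] at h1
      exact (sub_eq_zero.mp h1).symm
    have h3 : (A ^ N) *ᵥ y = y := hfix N y hAy
    rw [← hy', Matrix.sub_mulVec, Matrix.one_mulVec, h3, sub_self]
  set ι : ℤ →ₗ[ℤ] ((Fin n → ℤ) ⧸ R) := R.mkQ ∘ₗ (W.subtype ∘ₗ e.toLinearMap) with hι
  have hιapp : ∀ z : ℤ, ι z = R.mkQ ↑(e z) := fun z => rfl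
  set B' := Submodule.mapQ W W (Matrix.toLin' (A ^ N)) (hWN N) with hB'
  set S := LinearMap.range (LinearMap.id - B') with hS
  have hBT : ∀ y : Fin n → ℤ,
      ((LinearMap.id : ((Fin n → ℤ) ⧸ W) →ₗ[ℤ] ((Fin n → ℤ) ⧸ W)) - B') (W.mkQ y)
        = W.mkQ (T y) := by
    intro y
    rw [LinearMap.sub_apply, LinearMap.id_apply, hB']
    simp only [Submodule.mkQ_apply, Submodule.mapQ_apply]
    rw [← Submodule.Quotient.mk_sub]
    congr 1
    rw [hTy, Matrix.toLin'_apply]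
  have hkerle : R ≤ LinearMap.ker (S.mkQ ∘ₗ W.mkQ) := by
    rintro v ⟨y, rfl⟩
    rw [LinearMap.mem_ker, LinearMap.comp_apply, Submodule.mkQ_apply,
      Submodule.Quotient.mk_eq_zero]
    exact ⟨W.mkQ y, hBT y⟩
  set p := R.liftQ (S.mkQ ∘ₗ W.mkQ) hkerle with hp
  have hpapp : ∀ v : Fin n → ℤ, p (R.mkQ v) = S.mkQ (W.mkQ v) := fun v => rfl
  have hιinj : Function.Injective ι := by
    intro z1 z2 h
    rw [hιapp, hιapp] at h
    have hsub : (↑(e z1) - ↑(e z2) : Fin n → ℤ) ∈ R := by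
      rwa [Submodule.mkQ_apply, Submodule.mkQ_apply, Submodule.Quotient.eq] at h
    have hsubW : (↑(e z1) - ↑(e z2) : Fin n → ℤ) ∈ W := W.sub_mem (e z1).2 (e z2).2
    have h0 := key2 _ hsubW hsub
    have : (↑(e z1) : Fin n → ℤ) = ↑(e z2) := by
      have := sub_eq_zero.mp h0
      exact this
    exact e.injective (Subtype.coe_injective this)
  have hps : Function.Surjective p := by
    intro q
    obtain ⟨u, rfl⟩ := S.mkQ_surjective q
    obtain ⟨v, rfl⟩ := W.mkQ_surjective u
    exact ⟨R.mkQ v, hpapp v⟩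
  refine ⟨ι, p, hιinj, hps, ?_⟩
  apply le_antisymm
  · rintro _ ⟨z, rfl⟩
    rw [LinearMap.mem_ker, hιapp, hpapp]
    have h0 : W.mkQ ↑(e z) = 0 := by
      rw [Submodule.mkQ_apply, Submodule.Quotient.mk_eq_zero]
      exact (e z).2
    rw [h0, map_zero]
  · intro q hq
    rw [LinearMap.mem_ker] at hq
    obtain ⟨v, rfl⟩ := R.mkQ_surjective q
    rw [hpapp] at hq
    have hq' : W.mkQ v ∈ S := by
      rwa [Submodule.mkQ_apply, Submodule.Quotient.mk_eq_zero] at hq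
    obtain ⟨u, hu⟩ := hq'
    obtain ⟨y, rfl⟩ := W.mkQ_surjective u
    have hu' : W.mkQ (T y) = W.mkQ v := by rw [← hBT y, hu]
    have hw : v - T y ∈ W := by
      have h1 : T y - v ∈ W := by
        rwa [Submodule.mkQ_apply, Submodule.mkQ_apply, Submodule.Quotient.eq] at hu'
      simpa using W.neg_mem h1
    refine ⟨e.symm ⟨v - T y, hw⟩, ?_⟩
    rw [hιapp, e.apply_symm_apply]
    rw [Submodule.mkQ_apply, Submodule.mkQ_apply, Submodule.Quotient.eq]
    have hTR : T y ∈ R := ⟨y, rfl⟩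
    have heq : v - T y - v = -(T y) := by abel
    rw [heq]
    exact R.neg_mem hTR
end

section
/- Let f : A₁ → A₂ be a map of integral metrized lattices of rank at most n, and suppose every singular value of f ⊗ ℝ is at most M, where M ≥ 1. Then 1 ≤ vol(ker f) ≤ vol(A₁) · Mⁿ, and likewise 1 ≤ vol(image f) ≤ vol(A₁) · Mⁿ. -/
open Matrix Finset

namespace GramAux

variable {E : Type*} [NormedAddCommGroup E] [InnerProductSpace ℝ E]

noncomputable def gram {ι : Type*} [Fintype ι] (v : ι → E) : Matrix ι ι ℝ :=
  Matrix.of fun i j => (inner ℝ (v i) (v j) : ℝ)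

lemma gram_apply {ι : Type*} [Fintype ι] (v : ι → E) (i j : ι) :
    gram v i j = (inner ℝ (v i) (v j) : ℝ) := rfl

lemma gram_transform {ι κ : Type*} [Fintype ι] [Fintype κ] (v : ι → E) (T : Matrix ι κ ℝ) :
    gram (fun j => ∑ i, T i j • v i) = Tᵀ * gram v * T := by
  ext a b
  have lhs : (gram (fun j => ∑ i, T i j • v i)) a b
      = ∑ i, ∑ j, T i a * (T j b * (inner ℝ (v i) (v j) : ℝ)) := by
    rw [gram_apply, sum_inner]
    refine Finset.sum_congr rfl fun i _ => ?_
    rw [real_inner_smul_left, inner_sum, Finset.mul_sum]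
    exact Finset.sum_congr rfl fun j _ => by rw [real_inner_smul_right]
  have rhs : (Tᵀ * gram v * T) a b = ∑ j, ∑ i, (T i a * (inner ℝ (v i) (v j) : ℝ)) * T j b := by
    simp [Matrix.mul_apply, gram_apply, Finset.sum_mul]
  rw [lhs, rhs, Finset.sum_comm]
  exact Finset.sum_congr rfl fun i _ => Finset.sum_congr rfl fun j _ => by ring

lemma dot_gram {ι : Type*} [Fintype ι] (v : ι → E) (x : ι → ℝ) :
    dotProduct x ((gram v) *ᵥ x) = ‖∑ i, x i • v i‖ ^ 2 := by
  rw [← real_inner_self_eq_norm_sq]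
  simp only [dotProduct, Matrix.mulVec, gram_apply, sum_inner, real_inner_smul_left,
    inner_sum, real_inner_smul_right, dotProduct, Finset.mul_sum]
  refine Finset.sum_congr rfl fun i _ => Finset.sum_congr rfl fun j _ => by rw [real_inner_comm (v i) (v j)]; ring

lemma gram_posSemidef {ι : Type*} [Fintype ι] (v : ι → E) : (gram v).PosSemidef := by
  rw [Matrix.posSemidef_iff_dotProduct_mulVec]
  constructor
  · ext i j
    simp [gram_apply, real_inner_comm, Matrix.conjTranspose_apply]
  · intro x
    rw [star_trivial, dot_gram]
    positivity

lemma gram_det_nonneg {ι : Type*} [Fintype ι] [DecidableEq ι] (v : ι → E) :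
    0 ≤ (gram v).det := by
  have h := gram_posSemidef v
  rw [h.1.det_eq_prod_eigenvalues]
  exact Finset.prod_nonneg fun i _ => by exact_mod_cast h.eigenvalues_nonneg i


lemma one_le_gram_det_int {ι : Type*} [Fintype ι] [DecidableEq ι] {v : ι → E}
    (hint : ∀ i j, ∃ m : ℤ, (inner ℝ (v i) (v j) : ℝ) = m)
    (hnz : ∀ a : ι → ℤ, (∑ i, (a i : ℝ) • v i) = 0 → ∀ i, a i = 0) :
    1 ≤ (gram v).det := by
  choose N hN using hint
  have hmap : (Matrix.of N).map (Int.cast : ℤ → ℝ) = gram v := by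
    ext i j; simp [gram_apply, hN]
  have hdet : (gram v).det = (((Matrix.of N).det : ℤ) : ℝ) := by
    rw [← hmap]; exact ((Int.castRingHom ℝ).map_det (Matrix.of N)).symm
  have hNdet : (Matrix.of N).det ≠ 0 := by
    intro h
    obtain ⟨a, ha0, ha⟩ := Matrix.exists_mulVec_eq_zero_iff.2 h
    have hsum : (∑ i, (a i : ℝ) • v i) = 0 := by
      have hv : (gram v) *ᵥ (fun i => (a i : ℝ)) = 0 := by
        funext i
        have := congrFun ha i
        simp only [Matrix.mulVec, dotProduct, Pi.zero_apply] at this ⊢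
        rw [← hmap]
        push_cast
        simp only [Matrix.map_apply, Int.cast_inj] at *
        exact_mod_cast congrArg (fun z : ℤ => (z : ℝ)) this
      have hnorm : ‖∑ i, (a i : ℝ) • v i‖ ^ 2 = 0 := by
        rw [← dot_gram, hv, dotProduct_zero]
      have := pow_eq_zero_iff (n := 2) (by norm_num) |>.1 hnorm
      exact norm_eq_zero.1 this
    exact ha0 (funext (hnz a hsum))
  have h0 : 0 ≤ (gram v).det := gram_det_nonneg v
  rw [hdet] at h0 ⊢
  have : (1 : ℤ) ≤ (Matrix.of N).det := by
    rcases (Matrix.of N).det.lt_or_lt_of_ne hNdet with h | h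
    · exact absurd h0 (by exact_mod_cast not_le.2 h)
    · exact h
  exact_mod_cast this

lemma det_gram_sum_elim {k r : ℕ} (u : Fin k → E) (c w : Fin r → E)
    (h1 : ∀ i, c i - w i ∈ Submodule.span ℝ (Set.range u))
    (h2 : ∀ i j, (inner ℝ (u i) (w j) : ℝ) = 0) :
    (gram (Sum.elim u c)).det = (gram u).det * (gram w).det := by
  have h1' : ∀ i, ∃ a : Fin k → ℝ, ∑ j, a j • u j = c i - w i := by
    intro i
    exact (Submodule.mem_span_range_iff_exists_fun ℝ).1 (h1 i)
  choose a ha using h1'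
  set T : Matrix (Fin k ⊕ Fin r) (Fin k ⊕ Fin r) ℝ :=
    Matrix.fromBlocks 1 (Matrix.of fun i j => a j i) 0 1 with hT
  have key : (fun j => ∑ i, T i j • (Sum.elim u w) i) = Sum.elim u c := by
    funext j
    rw [Fintype.sum_sum_type]
    rcases j with j | j
    · simp [hT, Matrix.one_apply, Finset.sum_ite_eq, ite_smul]
    · simp only [hT, Matrix.fromBlocks_apply₁₂, Matrix.fromBlocks_apply₂₂, Matrix.of_apply,
        Sum.elim_inl, Sum.elim_inr, Matrix.one_apply, ite_smul, one_smul, zero_smul]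
      rw [Finset.sum_ite_eq']
      simp [ha j]
  have hG : gram (Sum.elim u c) = Tᵀ * gram (Sum.elim u w) * T := by
    rw [← key]; exact gram_transform _ T
  have hdT : T.det = 1 := by
    rw [hT, Matrix.det_fromBlocks_zero₂₁]; simp
  have hblock : gram (Sum.elim u w) = Matrix.fromBlocks (gram u) 0 0 (gram w) := by
    ext i j
    rcases i with i | i <;> rcases j with j | j
    · rfl
    · simpa [gram_apply] using h2 i j
    · simp only [gram_apply, Sum.elim_inr, Sum.elim_inl, Matrix.fromBlocks_apply₂₁,
        Matrix.zero_apply]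
      rw [real_inner_comm]; exact h2 j i
    · rfl
  rw [hG, Matrix.det_mul, Matrix.det_mul, Matrix.det_transpose, hdT, hblock,
    Matrix.det_fromBlocks_zero₁₂]
  ring


lemma det_gram_succ [FiniteDimensional ℝ E] {m : ℕ} (v : Fin (m + 1) → E) :
    (gram v).det = (gram (v ∘ Fin.castSucc)).det *
      ‖(Submodule.orthogonalProjectionOnto (Submodule.span ℝ (Set.range (v ∘ Fin.castSucc)))ᗮ
          (v (Fin.last m)) : E)‖ ^ 2 := by
  set K := Submodule.span ℝ (Set.range (v ∘ Fin.castSucc)) with hK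
  set w : E := (Submodule.orthogonalProjectionOnto Kᗮ (v (Fin.last m)) : E) with hw
  have h1 : ∀ _i : Fin 1, v (Fin.last m) - w ∈ K := by
    intro _
    have h := Submodule.sub_starProjection_mem_orthogonal (K := Kᗮ) (v (Fin.last m))
    rwa [Submodule.orthogonal_orthogonal] at h
  have hwmem : w ∈ Kᗮ := SetLike.coe_mem _
  have h2 : ∀ (i : Fin m) (_j : Fin 1),
      (inner ℝ ((v ∘ Fin.castSucc) i) ((fun _ : Fin 1 => w) _j) : ℝ) = 0 := by
    intro i _
    exact (Submodule.mem_orthogonal K w).1 hwmem _ (Submodule.subset_span ⟨i, rfl⟩)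
  have hsplit := det_gram_sum_elim (v ∘ Fin.castSucc) (fun _ : Fin 1 => v (Fin.last m))
    (fun _ : Fin 1 => w) h1 h2
  have helim : Sum.elim (v ∘ Fin.castSucc) (fun _ : Fin 1 => v (Fin.last m))
      = v ∘ finSumFinEquiv := by
    funext x
    rcases x with x | x
    · rfl
    · simp only [Sum.elim_inr, Function.comp_apply]
      congr 1
      ext
      simp [Fin.last, Subsingleton.elim x 0]
  have hre : (gram (Sum.elim (v ∘ Fin.castSucc) (fun _ : Fin 1 => v (Fin.last m)))).det
      = (gram v).det := by
    rw [helim]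
    have : gram (v ∘ finSumFinEquiv) = (gram v).submatrix finSumFinEquiv finSumFinEquiv := rfl
    rw [this, Matrix.det_submatrix_equiv_self]
  have hone : (gram (fun _ : Fin 1 => w)).det = ‖w‖ ^ 2 := by
    rw [Matrix.det_fin_one, gram_apply, real_inner_self_eq_norm_sq]
  rw [← hre, hsplit, hone]

lemma det_gram_comp_le {E₂ : Type*} [NormedAddCommGroup E₂] [InnerProductSpace ℝ E₂]
    [FiniteDimensional ℝ E] [FiniteDimensional ℝ E₂]
    (F : E →ₗ[ℝ] E₂) {M : ℝ} (hM : 0 ≤ M) (hF : ∀ x, ‖F x‖ ≤ M * ‖x‖) :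
    ∀ {r : ℕ} (v : Fin r → E), (gram (F ∘ v)).det ≤ (M ^ 2) ^ r * (gram v).det := by
  intro r
  induction r with
  | zero =>
    intro v
    simp [Matrix.det_isEmpty]
  | succ m ih =>
    intro v
    rw [det_gram_succ (F ∘ v), det_gram_succ v]
    set K := Submodule.span ℝ (Set.range (v ∘ Fin.castSucc)) with hK
    set K' := Submodule.span ℝ (Set.range ((F ∘ v) ∘ Fin.castSucc)) with hK'
    set w : E := (Submodule.orthogonalProjectionOnto Kᗮ (v (Fin.last m)) : E) with hw
    have hmemK : v (Fin.last m) - w ∈ K := by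
      have h := Submodule.sub_starProjection_mem_orthogonal (K := Kᗮ) (v (Fin.last m))
      rwa [Submodule.orthogonal_orthogonal] at h
    have hFK : ∀ x ∈ K, F x ∈ K' := by
      intro x hx
      have : K.map F ≤ K' := by
        rw [hK, Submodule.map_span, hK']
        apply Submodule.span_mono
        rintro _ ⟨_, ⟨i, rfl⟩, rfl⟩
        exact ⟨i, rfl⟩
      exact this (Submodule.mem_map_of_mem hx)
    have hproj : (Submodule.orthogonalProjectionOnto K'ᗮ (F (v (Fin.last m))) : E₂)
        = (Submodule.orthogonalProjectionOnto K'ᗮ (F w) : E₂) := by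
      have hdiff : F (v (Fin.last m)) - F w ∈ K' := by
        rw [← map_sub]; exact hFK _ hmemK
      have hzero : Submodule.orthogonalProjectionOnto K'ᗮ (F (v (Fin.last m)) - F w) = 0 :=
        Submodule.orthogonalProjectionOnto_apply_of_mem_orthogonal
          (Submodule.le_orthogonal_orthogonal K' hdiff)
      have := map_sub (Submodule.orthogonalProjectionOnto K'ᗮ) (F (v (Fin.last m))) (F w)
      rw [hzero] at this
      have h2 := congrArg (fun z : K'ᗮ => (z : E₂)) this
      simpa [sub_eq_zero] using h2.symm
    have hnb : ‖(Submodule.orthogonalProjectionOnto K'ᗮ ((F ∘ v) (Fin.last m)) : E₂)‖ ≤ M * ‖w‖ := by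
      have h0 : ‖(Submodule.orthogonalProjectionOnto K'ᗮ (F w) : E₂)‖ ≤ ‖F w‖ := by
        calc ‖(Submodule.orthogonalProjectionOnto K'ᗮ (F w) : E₂)‖
            = ‖Submodule.orthogonalProjectionOnto K'ᗮ (F w)‖ := rfl
          _ ≤ ‖Submodule.orthogonalProjectionOnto K'ᗮ‖ * ‖F w‖ :=
              (Submodule.orthogonalProjectionOnto K'ᗮ).le_opNorm (F w)
          _ ≤ 1 * ‖F w‖ :=
              mul_le_mul_of_nonneg_right (Submodule.orthogonalProjectionOnto_norm_le _) (norm_nonneg _)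
          _ = ‖F w‖ := one_mul _
      calc ‖(Submodule.orthogonalProjectionOnto K'ᗮ ((F ∘ v) (Fin.last m)) : E₂)‖
          = ‖(Submodule.orthogonalProjectionOnto K'ᗮ (F w) : E₂)‖ := by
            rw [show (F ∘ v) (Fin.last m) = F (v (Fin.last m)) from rfl, hproj]
        _ ≤ ‖F w‖ := h0
        _ ≤ M * ‖w‖ := hF w
    have h1 : (gram ((F ∘ v) ∘ Fin.castSucc)).det
        ≤ (M ^ 2) ^ m * (gram (v ∘ Fin.castSucc)).det := ih (v ∘ Fin.castSucc)
    have hb : ‖(Submodule.orthogonalProjectionOnto K'ᗮ ((F ∘ v) (Fin.last m)) : E₂)‖ ^ 2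
        ≤ M ^ 2 * ‖w‖ ^ 2 := by
      rw [← mul_pow]
      exact pow_le_pow_left₀ (norm_nonneg _) hnb 2
    refine le_trans (mul_le_mul h1 hb (by positivity)
      (mul_nonneg (by positivity) (gram_det_nonneg _))) (le_of_eq (by ring))


lemma det_gram_basis_change {L : Type*} [AddCommGroup L] [Module ℤ L] {ι : Type*}
    [Fintype ι] [DecidableEq ι] (b c : Module.Basis ι ℤ L) (ιL : L →ₗ[ℤ] E) :
    (gram (fun i => ιL (c i))).det = (gram (fun i => ιL (b i))).det := by
  set A : Matrix ι ι ℝ := (b.toMatrix ⇑c).map (Int.cast : ℤ → ℝ) with hA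
  have key : (fun j => ∑ i, A i j • (ιL (b i))) = fun j => ιL (c j) := by
    funext j
    have hs := congrArg ιL (b.sum_repr (c j))
    rw [map_sum] at hs
    rw [← hs]
    refine Finset.sum_congr rfl fun i _ => ?_
    rw [LinearMap.map_smul, hA]
    simp only [Matrix.map_apply, Module.Basis.toMatrix_apply]
    exact Int.cast_smul_eq_zsmul ℝ _ _
  have hG : gram (fun i => ιL (c i)) = Aᵀ * gram (fun i => ιL (b i)) * A := by
    rw [← key]; exact gram_transform _ A
  have hu : (b.toMatrix ⇑c).det * (c.toMatrix ⇑b).det = 1 := by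
    rw [← Matrix.det_mul, Module.Basis.toMatrix_mul_toMatrix_flip, Matrix.det_one]
  have hsq : (b.toMatrix ⇑c).det * (b.toMatrix ⇑c).det = 1 := by
    rcases Int.isUnit_iff.1 (IsUnit.of_mul_eq_one _ hu) with h | h <;> rw [h] <;> norm_num
  have hAdet : A.det * A.det = 1 := by
    have : A.det = (((b.toMatrix ⇑c).det : ℤ) : ℝ) :=
      ((Int.castRingHom ℝ).map_det (b.toMatrix ⇑c)).symm
    rw [this]
    exact_mod_cast congrArg (fun z : ℤ => (z : ℝ)) hsq
  rw [hG, Matrix.det_mul, Matrix.det_mul, Matrix.det_transpose]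
  calc A.det * (gram fun i => ιL (b i)).det * A.det
      = A.det * A.det * (gram fun i => ιL (b i)).det := by ring
    _ = (gram fun i => ιL (b i)).det := by rw [hAdet, one_mul]

lemma lattice_inj {L : Type*} [AddCommGroup L] [Module ℤ L] {n₀ : ℕ} (ι₀ : L →ₗ[ℤ] E)
    (b : Module.Basis (Fin n₀) ℤ L) (hind : LinearIndependent ℝ fun i => ι₀ (b i)) :
    ∀ x : L, ι₀ x = 0 → x = 0 := by
  intro x hx
  have hsum : ∑ i, ((b.repr x i : ℤ) : ℝ) • ι₀ (b i) = 0 := by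
    have hs := congrArg ι₀ (b.sum_repr x)
    rw [map_sum, hx] at hs
    rw [← hs]
    refine Finset.sum_congr rfl fun i _ => ?_
    rw [LinearMap.map_smul]
    exact Int.cast_smul_eq_zsmul ℝ _ _
  have hz := Fintype.linearIndependent_iff.1 hind _ hsum
  have : ∀ i, b.repr x i = 0 := fun i => by exact_mod_cast hz i
  have : b.repr x = 0 := Finsupp.ext this
  simpa using congrArg b.repr.symm this

end GramAux

open GramAux


/-- The Gram covolume of a family of vectors in a real inner product space: the square
root of the absolute value of the determinant of the Gram matrix `⟪vᵢ, vⱼ⟫`.  When the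
family is (the image of) a `ℤ`-basis of a lattice, this is the covolume `vol` of the
lattice. -/
noncomputable def gramVol {E : Type*} [NormedAddCommGroup E] [InnerProductSpace ℝ E]
    {n : ℕ} (v : Fin n → E) : ℝ :=
  Real.sqrt |(Matrix.of fun i j => (inner ℝ (v i) (v j) : ℝ)).det|

/-- Let `f : A₁ → A₂` be a map of integral metrized lattices of rank at most `n`
(realized as full lattices, via `ι₁`, `ι₂`, in finite-dimensional real inner product
spaces, with integer-valued inner products), and suppose every singular value of the
real extension `F` of `f` is at most `M ≥ 1` (equivalently, `‖F x‖ ≤ M ‖x‖` for all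
`x`).  Then `1 ≤ vol(ker f) ≤ vol(A₁) · Mⁿ` and `1 ≤ vol(image f) ≤ vol(A₁) · Mⁿ`,
where `ker f` and `image f` carry the induced metrics. -/
theorem vol_ker_and_vol_image_bounds {E₁ E₂ : Type*} [NormedAddCommGroup E₁]
    [InnerProductSpace ℝ E₁] [NormedAddCommGroup E₂] [InnerProductSpace ℝ E₂]
    [FiniteDimensional ℝ E₁] [FiniteDimensional ℝ E₂]
    {L₁ L₂ : Type*} [AddCommGroup L₁] [Module ℤ L₁] [AddCommGroup L₂] [Module ℤ L₂]
    {n n₁ n₂ k r : ℕ} (hn₁ : n₁ ≤ n) (hn₂ : n₂ ≤ n)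
    (ι₁ : L₁ →ₗ[ℤ] E₁) (ι₂ : L₂ →ₗ[ℤ] E₂)
    (b₁ : Module.Basis (Fin n₁) ℤ L₁) (b₂ : Module.Basis (Fin n₂) ℤ L₂)
    (hb₁ind : LinearIndependent ℝ fun i => ι₁ (b₁ i))
    (hb₁span : Submodule.span ℝ (Set.range fun i => ι₁ (b₁ i)) = ⊤)
    (hb₂ind : LinearIndependent ℝ fun i => ι₂ (b₂ i))
    (hb₂span : Submodule.span ℝ (Set.range fun i => ι₂ (b₂ i)) = ⊤)
    -- integrality of both lattices
    (hint₁ : ∀ x y : L₁, ∃ m : ℤ, (inner ℝ (ι₁ x) (ι₁ y) : ℝ) = m)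
    (hint₂ : ∀ x y : L₂, ∃ m : ℤ, (inner ℝ (ι₂ x) (ι₂ y) : ℝ) = m)
    (f : L₁ →ₗ[ℤ] L₂) (F : E₁ →ₗ[ℝ] E₂)
    (hcompat : ∀ v : L₁, F (ι₁ v) = ι₂ (f v))
    (M : ℝ) (hM : 1 ≤ M)
    -- every singular value of `f ⊗ ℝ = F` is at most `M`
    (hF : ∀ x : E₁, ‖F x‖ ≤ M * ‖x‖)
    -- a `ℤ`-basis of `ker f`
    (bk : Fin k → L₁) (hbkind : LinearIndependent ℤ bk)
    (hbkspan : Submodule.span ℤ (Set.range bk) = LinearMap.ker f)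
    -- a `ℤ`-basis of `image f`
    (bi : Fin r → L₂) (hbiind : LinearIndependent ℤ bi)
    (hbispan : Submodule.span ℤ (Set.range bi) = LinearMap.range f) :
    (1 ≤ gramVol (fun i => ι₁ (bk i)) ∧
        gramVol (fun i => ι₁ (bk i)) ≤ gramVol (fun i => ι₁ (b₁ i)) * M ^ n) ∧
      (1 ≤ gramVol (fun i => ι₂ (bi i)) ∧
        gramVol (fun i => ι₂ (bi i)) ≤ gramVol (fun i => ι₁ (b₁ i)) * M ^ n) := by
  haveI hsub₁ : Subsingleton (Module ℤ L₁) :=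
    ⟨fun a b => ((AddCommGroup.uniqueIntModule (M := L₁)).uniq a).trans
      ((AddCommGroup.uniqueIntModule (M := L₁)).uniq b).symm⟩
  haveI hsub₂ : Subsingleton (Module ℤ L₂) :=
    ⟨fun a b => ((AddCommGroup.uniqueIntModule (M := L₂)).uniq a).trans
      ((AddCommGroup.uniqueIntModule (M := L₂)).uniq b).symm⟩
  obtain rfl : ‹Module ℤ L₁› = AddCommGroup.toIntModule L₁ := Subsingleton.elim _ _
  obtain rfl : ‹Module ℤ L₂› = AddCommGroup.toIntModule L₂ := Subsingleton.elim _ _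
  have hM0 : (0 : ℝ) ≤ M := le_trans zero_le_one hM
  -- injectivity of the lattice embeddings
  have hinj₁ := lattice_inj ι₁ b₁ hb₁ind
  have hinj₂ := lattice_inj ι₂ b₂ hb₂ind
  -- basic membership facts
  have hbk0 : ∀ i, f (bk i) = 0 := by
    intro i
    have : bk i ∈ LinearMap.ker f := by
      rw [← hbkspan]; exact Submodule.subset_span ⟨i, rfl⟩
    exact LinearMap.mem_ker.1 this
  have hbi_mem : ∀ i, bi i ∈ LinearMap.range f := by
    intro i
    rw [← hbispan]; exact Submodule.subset_span ⟨i, rfl⟩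
  choose c hc using fun i => (hbi_mem i)
  -- construct the adapted basis of L₁
  have hind : LinearIndependent ℤ (Sum.elim bk c) := by
    rw [Fintype.linearIndependent_iff]
    intro g hg
    rw [Fintype.sum_sum_type] at hg
    simp only [Sum.elim_inl, Sum.elim_inr] at hg
    have hfg := congrArg f hg
    rw [map_add, map_sum, map_sum, map_zero] at hfg
    simp only [LinearMap.map_smul, hbk0, smul_zero, hc, Finset.sum_const_zero,
      zero_add] at hfg
    have hgr : ∀ i, g (Sum.inr i) = 0 :=
      Fintype.linearIndependent_iff.1 hbiind _ hfg
    simp only [hgr, zero_smul, Finset.sum_const_zero, add_zero] at hg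
    have hgl : ∀ i, g (Sum.inl i) = 0 :=
      Fintype.linearIndependent_iff.1 hbkind _ hg
    rintro (i | i)
    · exact hgl i
    · exact hgr i
  have hspan : ⊤ ≤ Submodule.span ℤ (Set.range (Sum.elim bk c)) := by
    intro x _
    have hfx : f x ∈ Submodule.span ℤ (Set.range bi) := by
      rw [hbispan]; exact ⟨x, rfl⟩
    obtain ⟨a, ha⟩ := (Submodule.mem_span_range_iff_exists_fun ℤ).1 hfx
    have hxy : f (x - ∑ i, a i • c i) = 0 := by
      rw [map_sub, map_sum]
      simp only [LinearMap.map_smul, hc]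
      rw [ha, sub_self]
    have hxk : x - ∑ i, a i • c i ∈ Submodule.span ℤ (Set.range bk) := by
      rw [hbkspan]; exact LinearMap.mem_ker.2 hxy
    obtain ⟨m, hm⟩ := (Submodule.mem_span_range_iff_exists_fun ℤ).1 hxk
    have hx : x = (∑ i, m i • bk i) + ∑ i, a i • c i := by
      rw [hm]; abel
    rw [hx]
    refine Submodule.add_mem _ (Submodule.sum_mem _ fun i _ => ?_)
      (Submodule.sum_mem _ fun i _ => ?_)
    · exact Submodule.smul_mem _ _ (Submodule.subset_span ⟨Sum.inl i, rfl⟩)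
    · exact Submodule.smul_mem _ _ (Submodule.subset_span ⟨Sum.inr i, rfl⟩)
  set B : Module.Basis (Fin k ⊕ Fin r) ℤ L₁ := Module.Basis.mk hind hspan with hB
  -- n₁ = k + r
  have hkr : n₁ = k + r := by
    have h1 := Module.finrank_eq_card_basis b₁
    have h2 := Module.finrank_eq_card_basis B
    rw [h1] at h2
    simpa using h2
  set e : Fin n₁ ≃ (Fin k ⊕ Fin r) := (finCongr hkr).trans finSumFinEquiv.symm with he
  -- determinant quantities
  set D₁ : ℝ := (gram (fun i => ι₁ (b₁ i))).det with hD₁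
  set Dk : ℝ := (gram (fun i => ι₁ (bk i))).det with hDk
  set Di : ℝ := (gram (fun i => ι₂ (bi i))).det with hDi
  -- change of basis: D₁ equals the Gram determinant of the adapted basis
  have hchange : (gram (fun i => ι₁ (B i))).det = D₁ := by
    have h1 : (gram (fun i => ι₁ (B i))).det = (gram (fun i => ι₁ ((b₁.reindex e) i))).det :=
      det_gram_basis_change (b₁.reindex e) B ι₁
    have h2 : gram (fun i => ι₁ ((b₁.reindex e) i))
        = (gram (fun i => ι₁ (b₁ i))).submatrix e.symm e.symm := by
      ext i j; simp [GramAux.gram_apply, Module.Basis.reindex_apply]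
    rw [h1, h2, Matrix.det_submatrix_equiv_self]
  -- the projections
  set K : Submodule ℝ E₁ := Submodule.span ℝ (Set.range fun i => ι₁ (bk i)) with hKdef
  set w : Fin r → E₁ := fun i => (Submodule.orthogonalProjectionOnto Kᗮ (ι₁ (c i)) : E₁) with hwdef
  have h1 : ∀ i, ι₁ (c i) - w i ∈ K := by
    intro i
    have h := Submodule.sub_starProjection_mem_orthogonal (K := Kᗮ) (ι₁ (c i))
    rwa [Submodule.orthogonal_orthogonal] at h
  have h2 : ∀ i j, (inner ℝ (ι₁ (bk i)) (w j) : ℝ) = 0 := by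
    intro i j
    exact (Submodule.mem_orthogonal K (w j)).1 (SetLike.coe_mem _) _
      (Submodule.subset_span ⟨i, rfl⟩)
  have hsplit : D₁ = Dk * (gram w).det := by
    rw [← hchange]
    have hBe : (fun i => ι₁ (B i)) = Sum.elim (fun i => ι₁ (bk i)) (fun i => ι₁ (c i)) := by
      funext x
      rcases x with x | x <;> simp [hB, Module.Basis.mk_apply]
    rw [hBe]
    exact det_gram_sum_elim _ _ _ h1 h2
  -- K is contained in the kernel of F
  have hKker : ∀ x ∈ K, F x = 0 := by
    intro x hx
    have : K ≤ LinearMap.ker F := by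
      rw [hKdef, Submodule.span_le]
      rintro _ ⟨i, rfl⟩
      rw [SetLike.mem_coe, LinearMap.mem_ker, hcompat, hbk0, map_zero]
    exact LinearMap.mem_ker.1 (this hx)
  -- F sends w to the image basis
  have hFw : F ∘ w = fun i => ι₂ (bi i) := by
    funext i
    have hz : F (ι₁ (c i) - w i) = 0 := hKker _ (h1 i)
    rw [map_sub, sub_eq_zero] at hz
    simp only [Function.comp_apply]
    rw [← hz, hcompat, hc]
  -- the key inequality
  have hineq : Di ≤ (M ^ 2) ^ r * (gram w).det := by
    rw [hDi, ← hFw]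
    exact det_gram_comp_le F hM0 hF w
  -- lower bounds by integrality
  have hDk1 : (1 : ℝ) ≤ Dk := by
    refine one_le_gram_det_int (fun i j => hint₁ _ _) ?_
    intro a ha i
    have : ι₁ (∑ i, a i • bk i) = 0 := by
      rw [map_sum, ← ha]
      exact Finset.sum_congr rfl fun i _ => by
        rw [LinearMap.map_smul]
        exact (Int.cast_smul_eq_zsmul ℝ _ _).symm
    have hz := hinj₁ _ this
    exact Fintype.linearIndependent_iff.1 hbkind a hz i
  have hDi1 : (1 : ℝ) ≤ Di := by
    refine one_le_gram_det_int (fun i j => hint₂ _ _) ?_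
    intro a ha i
    have : ι₂ (∑ i, a i • bi i) = 0 := by
      rw [map_sum, ← ha]
      exact Finset.sum_congr rfl fun i _ => by
        rw [LinearMap.map_smul]
        exact (Int.cast_smul_eq_zsmul ℝ _ _).symm
    have hz := hinj₂ _ this
    exact Fintype.linearIndependent_iff.1 hbiind a hz i
  -- r ≤ n
  have hrn : r ≤ n := by
    have : Module.Finite ℤ L₂ := Module.Finite.of_basis b₂
    have h := hbiind.fintype_card_le_finrank
    rw [Module.finrank_eq_card_basis b₂] at h
    simpa using le_trans (by simpa using h) hn₂
  -- nonnegativity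
  have hDw0 : (0 : ℝ) ≤ (gram w).det := gram_det_nonneg w
  have hD₁0 : (0 : ℝ) ≤ D₁ := gram_det_nonneg _
  have hM21 : (1 : ℝ) ≤ M ^ 2 := one_le_pow₀ hM
  have hMrn : (M ^ 2) ^ r ≤ (M ^ 2) ^ n := pow_le_pow_right₀ hM21 hrn
  -- upper bound for Dk
  have hDkle : Dk ≤ (M ^ 2) ^ n * D₁ := by
    have h1 : (1 : ℝ) ≤ (M ^ 2) ^ r * (gram w).det := le_trans hDi1 hineq
    calc Dk = Dk * 1 := (mul_one _).symm
      _ ≤ Dk * ((M ^ 2) ^ r * (gram w).det) :=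
          mul_le_mul_of_nonneg_left h1 (le_trans zero_le_one hDk1)
      _ = (M ^ 2) ^ r * (Dk * (gram w).det) := by ring
      _ = (M ^ 2) ^ r * D₁ := by rw [← hsplit]
      _ ≤ (M ^ 2) ^ n * D₁ := mul_le_mul_of_nonneg_right hMrn hD₁0
  -- upper bound for Di
  have hDile : Di ≤ (M ^ 2) ^ n * D₁ := by
    have hwle : (gram w).det ≤ D₁ := by
      calc (gram w).det = 1 * (gram w).det := (one_mul _).symm
        _ ≤ Dk * (gram w).det := mul_le_mul_of_nonneg_right hDk1 hDw0
        _ = D₁ := hsplit.symm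
    calc Di ≤ (M ^ 2) ^ r * (gram w).det := hineq
      _ ≤ (M ^ 2) ^ n * D₁ := mul_le_mul hMrn hwle hDw0 (by positivity)
  -- convert to gramVol
  have hvol : ∀ {m : ℕ} (v : Fin m → E₁), gramVol v = Real.sqrt |(gram v).det| := fun _ => rfl
  have hvol₂ : ∀ {m : ℕ} (v : Fin m → E₂), gramVol v = Real.sqrt |(gram v).det| := fun _ => rfl
  have habs : ∀ {x : ℝ}, 0 ≤ x → |x| = x := fun h => abs_of_nonneg h
  have hsqrt_bound : ∀ {x : ℝ}, x ≤ (M ^ 2) ^ n * D₁ →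
      Real.sqrt x ≤ Real.sqrt D₁ * M ^ n := by
    intro x hx
    calc Real.sqrt x ≤ Real.sqrt ((M ^ 2) ^ n * D₁) := Real.sqrt_le_sqrt hx
      _ = Real.sqrt ((M ^ n) ^ 2 * D₁) := by rw [← pow_mul, ← pow_mul, Nat.mul_comm]
      _ = Real.sqrt ((M ^ n) ^ 2) * Real.sqrt D₁ := Real.sqrt_mul (by positivity) _
      _ = M ^ n * Real.sqrt D₁ := by rw [Real.sqrt_sq (by positivity)]
      _ = Real.sqrt D₁ * M ^ n := mul_comm _ _
  constructor
  · constructor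
    · rw [hvol, habs (le_trans zero_le_one hDk1)]
      exact Real.one_le_sqrt.2 hDk1
    · rw [hvol, hvol, habs (le_trans zero_le_one hDk1), habs hD₁0]
      exact hsqrt_bound hDkle
  · constructor
    · rw [hvol₂, habs (le_trans zero_le_one hDi1)]
      exact Real.one_le_sqrt.2 hDi1
    · rw [hvol₂, hvol, habs (le_trans zero_le_one hDi1), habs hD₁0]
      exact hsqrt_bound hDile
end
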